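/- Let a < b be real numbers and let f : ℝ → ℝ be continuously differentiable on [a,b]. Then f is monotone increasing on [a,b] if and only if D^α_{*a} f(t) ≥ 0 for all t ∈ [a,b] and all α ∈ (0,1). -/

import Mathlib

open MeasureTheory intervalIntegral Set Filter

lemma kernel_intble (t α c d : ℝ) (hα : -1 < -α) :
    IntervalIntegrable (fun s => (t - s) ^ (-α)) volume c d := by
  have h := (intervalIntegrable_rpow' (a := t - c) (b := t - d) hα).comp_sub_left t
  simpa using h

lemma kernel_integral {α : ℝ} (t c d : ℝ) (hα : -1 < -α) :
    ∫ s in c..d, (t - s) ^ (-α) = ((t - c) ^ (1 - α) - (t - d) ^ (1 - α)) / (1 - α) := by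
  rw [intervalIntegral.integral_comp_sub_left (fun u => u ^ (-α)) t,
    integral_rpow (Or.inl hα)]
  ring_nf

lemma deriv_nonneg_of_monotoneOn {f : ℝ → ℝ} {a b s : ℝ} (hs : s ∈ Set.Ioo a b)
    (hm : MonotoneOn f (Set.Icc a b)) (hd : DifferentiableAt ℝ f s) : 0 ≤ deriv f s := by
  have h := hd.hasDerivAt
  rw [hasDerivAt_iff_tendsto_slope] at h
  have h' : Filter.Tendsto (slope f s) (nhdsWithin s (Set.Ioi s)) (nhds (deriv f s)) :=
    h.mono_left (nhdsWithin_mono _ fun y hy => ne_of_gt hy)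
  refine ge_of_tendsto h' ?_
  filter_upwards [Ioo_mem_nhdsGT_of_mem ⟨le_refl s, hs.2⟩] with y hy
  rw [slope_def_field]
  have h1 : f s ≤ f y := hm ⟨hs.1.le, hs.2.le⟩ ⟨(hs.1.trans hy.1).le, hy.2.le⟩ hy.1.le
  have := div_nonneg (sub_nonneg.2 h1) (sub_nonneg.2 hy.1.le)
  simpa [div_eq_iff] using this

-- converse core: interior nonneg derivative
lemma converse_core (a b : ℝ) (hab : a < b) (f : ℝ → ℝ)
    (hf : ContDiffOn ℝ 1 f (Set.Icc a b))
    (H : ∀ t ∈ Set.Icc a b, ∀ α ∈ Set.Ioo (0 : ℝ) 1,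
      0 ≤ ∫ s in a..t, (t - s) ^ (-α) * deriv f s)
    (t0 : ℝ) (ht0 : t0 ∈ Set.Ioo a b) : 0 ≤ deriv f t0 := by
  by_contra hneg
  push_neg at hneg
  -- continuity of deriv f on Ioo a b
  have hc : ContinuousOn (derivWithin f (Set.Icc a b)) (Set.Icc a b) :=
    hf.continuousOn_derivWithin (uniqueDiffOn_Icc hab) le_rfl
  have heq : ∀ s ∈ Set.Ioo a b, deriv f s = derivWithin f (Set.Icc a b) s := by
    intro s hs
    exact (derivWithin_of_mem_nhds (Icc_mem_nhds hs.1 hs.2)).symm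
  have hcont : ContinuousOn (deriv f) (Set.Ioo a b) :=
    (hc.mono Ioo_subset_Icc_self).congr heq
  obtain ⟨M, hM⟩ := isCompact_Icc.exists_bound_of_continuousOn hc
  set M0 : ℝ := max M 0 with hM0
  have hM0nn : 0 ≤ M0 := le_max_right _ _
  have hMg : ∀ s ∈ Set.Ioo a b, |deriv f s| ≤ M0 := by
    intro s hs
    rw [heq s hs]
    exact le_trans (hM s (Ioo_subset_Icc_self hs)) (le_max_left _ _)
  -- choose δ
  have hct : ContinuousAt (deriv f) t0 := hcont.continuousAt (isOpen_Ioo.mem_nhds ht0)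
  have hε : 0 < -(deriv f t0) / 2 := by linarith
  obtain ⟨δ', hδ', hball⟩ := Metric.continuousAt_iff.mp hct _ hε
  set δ : ℝ := min (δ' / 2) ((t0 - a) / 2) with hδdef
  have hδpos : 0 < δ := lt_min (by linarith) (by simp; linarith [ht0.1])
  have hδa : a < t0 - δ := by
    have : δ ≤ (t0 - a) / 2 := min_le_right _ _
    linarith [ht0.1]
  have hδt : t0 - δ < t0 := by linarith
  have hsub : Set.Icc (t0 - δ) t0 ⊆ Set.Ioo a b := fun s hs =>
    ⟨lt_of_lt_of_le hδa hs.1, lt_of_le_of_lt hs.2 ht0.2⟩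
  have hgs : ∀ s ∈ Set.Icc (t0 - δ) t0, deriv f s ≤ deriv f t0 / 2 := by
    intro s hs
    have hd : dist s t0 < δ' := by
      rw [Real.dist_eq, abs_lt]
      have h1 := hs.1; have h2 := hs.2
      have : δ ≤ δ' / 2 := min_le_left _ _
      constructor <;> linarith
    have := hball hd
    rw [Real.dist_eq] at this
    have := abs_lt.mp this
    linarith [this.2]
  -- key estimate per α
  have key : ∀ α ∈ Set.Ioo (0:ℝ) 1,
      0 ≤ M0 * ((t0 - a) ^ (1 - α) - δ ^ (1 - α)) + deriv f t0 / 2 * δ ^ (1 - α) := by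
    rintro α ⟨hα0, hα1⟩
    have hαm : (-1:ℝ) < -α := by linarith
    have h1α : (0:ℝ) < 1 - α := by linarith
    have hbnd : ∀ c d, a ≤ c → d ≤ t0 → ∀ s ∈ Set.Ioc c d,
        ‖(t0 - s) ^ (-α) * deriv f s‖ ≤ M0 * (t0 - s) ^ (-α) := by
      intro c d hac hdt s hs
      have hsm : s ∈ Set.Ioo a b :=
        ⟨lt_of_le_of_lt hac hs.1, lt_of_le_of_lt (hs.2.trans hdt) ht0.2⟩
      have hK : 0 ≤ (t0 - s) ^ (-α) :=
        Real.rpow_nonneg (by linarith [hs.2.trans hdt] : (0:ℝ) ≤ t0 - s) _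
      rw [Real.norm_eq_abs, abs_mul, abs_of_nonneg hK, mul_comm M0 _]
      exact mul_le_mul_of_nonneg_left (hMg s hsm) hK
    have hint : ∀ c d, a ≤ c → c ≤ d → d ≤ t0 →
        IntervalIntegrable (fun s => (t0 - s) ^ (-α) * deriv f s) volume c d := by
      intro c d hac hcd hdt
      rw [intervalIntegrable_iff_integrableOn_Ioo_of_le hcd]
      apply Integrable.mono' (g := fun s => M0 * (t0 - s) ^ (-α))
      · exact (intervalIntegrable_iff_integrableOn_Ioo_of_le hcd).mp
          ((kernel_intble t0 α c d hαm).const_mul M0)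
      · have hKc : ContinuousOn (fun s : ℝ => (t0 - s) ^ (-α)) (Set.Ioo c d) := by
          apply ContinuousOn.rpow_const ((continuous_const.sub continuous_id).continuousOn)
          intro x hx
          left
          have : x < t0 := lt_of_lt_of_le hx.2 hdt
          intro h; rw [Pi.sub_apply, sub_eq_zero] at h; exact absurd h.symm (ne_of_lt this)
        exact (hKc.aestronglyMeasurable measurableSet_Ioo).mul
          ((measurable_deriv f).aestronglyMeasurable.restrict)
      · rw [ae_restrict_iff' measurableSet_Ioo]
        exact ae_of_all _ (fun s hs => hbnd c d hac hdt s (Set.Ioo_subset_Ioc_self hs))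
    have hIA := hint a (t0 - δ) le_rfl (by linarith) (by linarith)
    have hIB := hint (t0 - δ) t0 hδa.le (by linarith) le_rfl
    have hsplit := integral_add_adjacent_intervals hIA hIB
    have h0 : 0 ≤ ∫ s in a..t0, (t0 - s) ^ (-α) * deriv f s :=
      H t0 ⟨ht0.1.le, ht0.2.le⟩ α ⟨hα0, hα1⟩
    have hA : (∫ s in a..(t0 - δ), (t0 - s) ^ (-α) * deriv f s)
        ≤ M0 * (((t0 - a) ^ (1 - α) - δ ^ (1 - α)) / (1 - α)) := by
      have hb1 : IntervalIntegrable (fun s => M0 * (t0 - s) ^ (-α)) volume a (t0 - δ) :=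
        (kernel_intble t0 α a (t0 - δ) hαm).const_mul M0
      have hnorm : ‖∫ s in a..(t0 - δ), (t0 - s) ^ (-α) * deriv f s‖
          ≤ |∫ s in a..(t0 - δ), M0 * (t0 - s) ^ (-α)| := by
        apply intervalIntegral.norm_integral_le_abs_of_norm_le ?_ hb1
        rw [uIoc_of_le (by linarith : a ≤ t0 - δ)]
        exact ae_restrict_of_forall_mem measurableSet_Ioc
          (hbnd a (t0 - δ) le_rfl (by linarith))
      have hle : δ ^ (1 - α) ≤ (t0 - a) ^ (1 - α) :=
        Real.rpow_le_rpow hδpos.le (by linarith) h1α.le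
      calc (∫ s in a..(t0 - δ), (t0 - s) ^ (-α) * deriv f s)
          ≤ ‖∫ s in a..(t0 - δ), (t0 - s) ^ (-α) * deriv f s‖ := le_abs_self _
        _ ≤ |∫ s in a..(t0 - δ), M0 * (t0 - s) ^ (-α)| := hnorm
        _ = M0 * (((t0 - a) ^ (1 - α) - δ ^ (1 - α)) / (1 - α)) := by
            rw [intervalIntegral.integral_const_mul, kernel_integral t0 a (t0 - δ) hαm,
              show t0 - (t0 - δ) = δ by ring]
            exact abs_of_nonneg (mul_nonneg hM0nn
              (div_nonneg (sub_nonneg.2 hle) h1α.le))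
    have hB : (∫ s in (t0 - δ)..t0, (t0 - s) ^ (-α) * deriv f s)
        ≤ deriv f t0 / 2 * (δ ^ (1 - α) / (1 - α)) := by
      have hb2 : IntervalIntegrable (fun s => (t0 - s) ^ (-α) * (deriv f t0 / 2))
          volume (t0 - δ) t0 := (kernel_intble t0 α _ _ hαm).mul_const _
      have hmono := intervalIntegral.integral_mono_on (by linarith : t0 - δ ≤ t0) hIB hb2
        (fun s hs => mul_le_mul_of_nonneg_left (hgs s hs)
          (Real.rpow_nonneg (by linarith [hs.2] : (0:ℝ) ≤ t0 - s) _))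
      calc (∫ s in (t0 - δ)..t0, (t0 - s) ^ (-α) * deriv f s)
          ≤ ∫ s in (t0 - δ)..t0, (t0 - s) ^ (-α) * (deriv f t0 / 2) := hmono
        _ = (∫ s in (t0 - δ)..t0, (t0 - s) ^ (-α)) * (deriv f t0 / 2) :=
            intervalIntegral.integral_mul_const _ _
        _ = deriv f t0 / 2 * (δ ^ (1 - α) / (1 - α)) := by
            rw [kernel_integral t0 (t0 - δ) t0 hαm, sub_self,
              Real.zero_rpow (by linarith : 1 - α ≠ 0)]
            rw [show t0 - (t0 - δ) = δ by ring]
            ring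
    have hsum : 0 ≤ M0 * (((t0 - a) ^ (1 - α) - δ ^ (1 - α)) / (1 - α))
        + deriv f t0 / 2 * (δ ^ (1 - α) / (1 - α)) := by
      rw [← hsplit] at h0
      linarith
    have h2 := mul_nonneg hsum h1α.le
    calc (0:ℝ) ≤ (M0 * (((t0 - a) ^ (1 - α) - δ ^ (1 - α)) / (1 - α))
        + deriv f t0 / 2 * (δ ^ (1 - α) / (1 - α))) * (1 - α) := h2
      _ = M0 * ((t0 - a) ^ (1 - α) - δ ^ (1 - α)) + deriv f t0 / 2 * δ ^ (1 - α) := by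
          field_simp
  -- limit as α → 1⁻
  have hta : t0 - a ≠ 0 := by linarith [ht0.1]
  have hδne : δ ≠ 0 := hδpos.ne'
  have h1 : ContinuousAt (fun α : ℝ => (t0 - a) ^ (1 - α)) 1 :=
    (Real.continuousAt_const_rpow hta).comp
      ((continuous_const.sub continuous_id).continuousAt)
  have h2 : ContinuousAt (fun α : ℝ => δ ^ (1 - α)) 1 :=
    (Real.continuousAt_const_rpow hδne).comp
      ((continuous_const.sub continuous_id).continuousAt)
  have hΦ : Filter.Tendsto
      (fun α : ℝ => M0 * ((t0 - a) ^ (1 - α) - δ ^ (1 - α)) + deriv f t0 / 2 * δ ^ (1 - α))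
      (nhds 1) (nhds (deriv f t0 / 2)) := by
    have hcont : ContinuousAt
        (fun α : ℝ => M0 * ((t0 - a) ^ (1 - α) - δ ^ (1 - α)) + deriv f t0 / 2 * δ ^ (1 - α)) 1 :=
      ((continuousAt_const.mul (h1.sub h2)).add (continuousAt_const.mul h2))
    have hval : M0 * ((t0 - a) ^ (1 - (1:ℝ)) - δ ^ (1 - (1:ℝ)))
        + deriv f t0 / 2 * δ ^ (1 - (1:ℝ)) = deriv f t0 / 2 := by
      norm_num
    simpa [hval] using hcont.tendsto
  have hΦ' : Filter.Tendsto
      (fun α : ℝ => M0 * ((t0 - a) ^ (1 - α) - δ ^ (1 - α)) + deriv f t0 / 2 * δ ^ (1 - α))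
      (nhdsWithin (1:ℝ) (Set.Iio 1)) (nhds (deriv f t0 / 2)) :=
    hΦ.mono_left nhdsWithin_le_nhds
  have hev : ∀ᶠ α in nhdsWithin (1:ℝ) (Set.Iio 1),
      M0 * ((t0 - a) ^ (1 - α) - δ ^ (1 - α)) + deriv f t0 / 2 * δ ^ (1 - α) < 0 :=
    hΦ'.eventually_lt_const (by linarith : deriv f t0 / 2 < (0:ℝ))
  have hev2 : ∀ᶠ α in nhdsWithin (1:ℝ) (Set.Iio 1), α ∈ Set.Ioo (0:ℝ) 1 := by
    filter_upwards [Ioo_mem_nhdsLT_of_mem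
      (⟨zero_lt_one, le_refl 1⟩ : (1:ℝ) ∈ Set.Ioc (0:ℝ) 1)] with x hx
    exact hx
  obtain ⟨α, hx1, hx2⟩ := (hev.and hev2).exists
  exact absurd (key α hx2) (not_le.mpr hx1)


/-- The Caputo fractional derivative of order `α` with starting point `a`:
`D^α_{*a} f(t) = (1/Γ(1-α)) ∫_a^t (t-s)^(-α) f'(s) ds`. -/
noncomputable def caputoDeriv (a α : ℝ) (f : ℝ → ℝ) (t : ℝ) : ℝ :=
  (Real.Gamma (1 - α))⁻¹ * ∫ s in a..t, (t - s) ^ (-α) * deriv f s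

theorem monotoneOn_iff_caputo_nonneg (a b : ℝ) (hab : a < b) (f : ℝ → ℝ)
    (hf : ContDiffOn ℝ 1 f (Set.Icc a b)) :
    MonotoneOn f (Set.Icc a b) ↔
      ∀ t ∈ Set.Icc a b, ∀ α ∈ Set.Ioo (0 : ℝ) 1, 0 ≤ caputoDeriv a α f t := by
  constructor
  · intro hm t ht α hα
    have hΓ : 0 < Real.Gamma (1 - α) := Real.Gamma_pos_of_pos (by linarith [hα.2])
    apply mul_nonneg (inv_nonneg.mpr hΓ.le)
    apply intervalIntegral.integral_nonneg_of_ae_restrict ht.1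
    rw [Filter.EventuallyLE, ae_restrict_iff' measurableSet_Icc]
    have hne : ∀ᵐ s : ℝ, s ≠ a := by
      simp [ae_iff, Real.volume_singleton]
    filter_upwards [hne] with s hsa hs
    show (0:ℝ) ≤ (t - s) ^ (-α) * deriv f s
    rcases eq_or_lt_of_le hs.2 with h | h
    · rw [h, sub_self, Real.zero_rpow (neg_ne_zero.mpr (ne_of_gt hα.1)), zero_mul]
    · have hsab : s ∈ Set.Ioo a b := ⟨lt_of_le_of_ne hs.1 (Ne.symm hsa), lt_of_lt_of_le h ht.2⟩
      have hd : DifferentiableAt ℝ f s :=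
        ((hf.differentiableOn one_ne_zero) s (Set.Ioo_subset_Icc_self hsab)).differentiableAt
          (Icc_mem_nhds hsab.1 hsab.2)
      exact mul_nonneg (Real.rpow_nonneg (by linarith : (0:ℝ) ≤ t - s) _)
        (deriv_nonneg_of_monotoneOn hsab hm hd)
  · intro H
    have H' : ∀ t ∈ Set.Icc a b, ∀ α ∈ Set.Ioo (0 : ℝ) 1,
        0 ≤ ∫ s in a..t, (t - s) ^ (-α) * deriv f s := by
      intro t ht α hα
      have hΓ : 0 < Real.Gamma (1 - α) := Real.Gamma_pos_of_pos (by linarith [hα.2])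
      have h := mul_nonneg hΓ.le (H t ht α hα)
      rwa [caputoDeriv, ← mul_assoc, mul_inv_cancel₀ hΓ.ne', one_mul] at h
    apply monotoneOn_of_deriv_nonneg (convex_Icc a b) hf.continuousOn
    · rw [interior_Icc]
      exact (hf.differentiableOn one_ne_zero).mono Set.Ioo_subset_Icc_self
    · rw [interior_Icc]
      exact fun t0 ht0 => converse_core a b hab f hf H' t0 ht0
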